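/- A function f ∈ L^1(k,s) is weakly sectorial if and only if 0 does not belong to the interior of the convex hull of ENR(f). -/

import Mathlib

open MeasureTheory Matrix Filter
open scoped Real Kronecker ComplexOrder

noncomputable section

/-- The cube `(-π,π)^k`. -/
def Ik (k : ℕ) : Set (Fin k → ℝ) := Set.univ.pi fun _ => Set.Ioo (-π) π

/-- Fourier coefficients of a matrix-valued symbol. -/
def fourierCoeffM (k s : ℕ) (f : (Fin k → ℝ) → Matrix (Fin s) (Fin s) ℂ)
    (j : Fin k → ℤ) : Matrix (Fin s) (Fin s) ℂ :=
  fun a b => (((2 * π : ℝ) ^ k)⁻¹ : ℂ) *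
    ∫ x in Ik k, Complex.exp (-Complex.I * ∑ i, (j i : ℂ) * (x i : ℂ)) * f x a b

/-- Multilevel block Toeplitz matrix. -/
def toeplitz (k s : ℕ) (n : Fin k → ℕ) (f : (Fin k → ℝ) → Matrix (Fin s) (Fin s) ℂ) :
    Matrix ((∀ i, Fin (n i)) × Fin s) ((∀ i, Fin (n i)) × Fin s) ℂ :=
  fun p q => fourierCoeffM k s f (fun i => (p.1 i : ℤ) - (q.1 i : ℤ)) p.2 q.2

/-- Singular values of a square complex matrix. -/
def singularValues {m : Type*} [Fintype m] [DecidableEq m] (A : Matrix m m ℂ) : m → ℝ :=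
  fun i => Real.sqrt ((Matrix.posSemidef_conjTranspose_mul_self A).1.eigenvalues i)

/-- Trace norm (Schatten 1-norm). -/
def traceNorm {m : Type*} [Fintype m] [DecidableEq m] (A : Matrix m m ℂ) : ℝ :=
  ∑ i, singularValues A i

/-- Spectral norm (largest singular value). -/
def specNorm {m : Type*} [Fintype m] [DecidableEq m] (A : Matrix m m ℂ) : ℝ :=
  ⨆ i, singularValues A i

/-- Essential numerical range of a matrix-valued function over `G`. -/
def ENR {k s : ℕ} (G : Set (Fin k → ℝ)) (f : (Fin k → ℝ) → Matrix (Fin s) (Fin s) ℂ) :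
    Set ℂ :=
  {r : ℂ | ∀ ε > 0, 0 < volume {t ∈ G | ∃ v : EuclideanSpace ℂ (Fin s),
    ‖v‖ = 1 ∧ dist (star (v : Fin s → ℂ) ⬝ᵥ f t *ᵥ (v : Fin s → ℂ)) r < ε}}

/-- Essential range of a scalar function over `G`. -/
def essRange {k : ℕ} (G : Set (Fin k → ℝ)) (h : (Fin k → ℝ) → ℂ) : Set ℂ :=
  {r : ℂ | ∀ ε > 0, 0 < volume {t ∈ G | dist (h t) r < ε}}

/-- Essential range of a matrix-valued function (union of essential ranges of
eigenvalue functions). -/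
def matER {k s : ℕ} (G : Set (Fin k → ℝ)) (f : (Fin k → ℝ) → Matrix (Fin s) (Fin s) ℂ) :
    Set ℂ :=
  {r : ℂ | ∀ ε > 0, 0 < volume {t ∈ G | ∃ w : ℂ, (f t).charpoly.IsRoot w ∧ dist w r < ε}}

/-- `f` is weakly sectorial. -/
def WeaklySectorial {k s : ℕ} (f : (Fin k → ℝ) → Matrix (Fin s) (Fin s) ℂ) : Prop :=
  ∃ (a : ℂ) (c : ℝ), ‖a‖ = 1 ∧ 0 ≤ c ∧ ∀ w ∈ ENR (Ik k) f, c ≤ ((starRingEnd ℂ) a * w).re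

/-- Rayleigh-quotient minimal eigenvalue. -/
def minEig {s : ℕ} (M : Matrix (Fin s) (Fin s) ℂ) : ℝ :=
  ⨅ v : {v : EuclideanSpace ℂ (Fin s) // ‖v‖ = 1},
    (star ((v : EuclideanSpace ℂ (Fin s)) : Fin s → ℂ) ⬝ᵥ
      M *ᵥ ((v : EuclideanSpace ℂ (Fin s)) : Fin s → ℂ)).re

/-- `f` is sectorial. -/
def Sectorial {k s : ℕ} (f : (Fin k → ℝ) → Matrix (Fin s) (Fin s) ℂ) : Prop :=
  ∃ (a : ℂ) (c : ℝ), ‖a‖ = 1 ∧ 0 ≤ c ∧ (∀ w ∈ ENR (Ik k) f, c ≤ ((starRingEnd ℂ) a * w).re) ∧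
    ¬ (∀ᵐ x ∂(volume.restrict (Ik k)),
        minEig ((starRingEnd ℂ a) • f x + a • (f x)ᴴ) = c)



lemma lin_repr (φ : ℂ →ₗ[ℝ] ℝ) (z : ℂ) :
    φ z = ((starRingEnd ℂ) (φ 1 + φ Complex.I * Complex.I) * z).re := by
  have hz : z = z.re • (1:ℂ) + z.im • Complex.I := by
    simp only [Complex.real_smul, mul_one]
    rw [Complex.re_add_im]
  nth_rewrite 1 [hz]
  rw [_root_.map_add, _root_.map_smul, _root_.map_smul]
  simp [Complex.mul_re, Complex.add_re, Complex.add_im, Complex.mul_im]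
  ring

lemma toA (φ : ℂ →ₗ[ℝ] ℝ) (hφ : φ ≠ 0) (c' : ℝ) (hc' : 0 ≤ c') (S : Set ℂ)
    (h : ∀ w ∈ S, c' ≤ φ w) :
    ∃ (a : ℂ) (c : ℝ), ‖a‖ = 1 ∧ 0 ≤ c ∧ ∀ w ∈ S, c ≤ ((starRingEnd ℂ) a * w).re := by
  set b : ℂ := φ 1 + φ Complex.I * Complex.I with hb
  have hbne : b ≠ 0 := by
    intro h0
    apply hφ
    ext z
    have := lin_repr φ z
    rw [← hb, h0] at this
    simpa using this
  have hnb : (0:ℝ) < ‖b‖ := norm_pos_iff.mpr hbne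
  refine ⟨(‖b‖:ℂ)⁻¹ * b, c' / ‖b‖, ?_, div_nonneg hc' hnb.le, ?_⟩
  · rw [norm_mul, norm_inv, Complex.norm_real, norm_norm]
    field_simp
  · intro w hw
    have h1 : ((starRingEnd ℂ) ((‖b‖:ℂ)⁻¹ * b) * w).re = ‖b‖⁻¹ * ((starRingEnd ℂ) b * w).re := by
      rw [_root_.map_mul, mul_assoc]
      have : (starRingEnd ℂ) ((‖b‖:ℂ)⁻¹) = ((‖b‖⁻¹ : ℝ) : ℂ) := by simp
      rw [this, Complex.re_ofReal_mul]
    rw [h1, ← lin_repr φ w, div_eq_inv_mul]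
    exact mul_le_mul_of_nonneg_left (h w hw) (inv_nonneg.mpr hnb.le)

lemma sep {S : Set ℂ} (h : (0:ℂ) ∉ interior (convexHull ℝ S)) :
    ∃ (a : ℂ) (c : ℝ), ‖a‖ = 1 ∧ 0 ≤ c ∧ ∀ w ∈ S, c ≤ ((starRingEnd ℂ) a * w).re := by
  rcases S.eq_empty_or_nonempty with rfl | ⟨p₀, hp₀⟩
  · exact ⟨1, 0, by simp, le_refl 0, by simp⟩
  set C := convexHull ℝ S with hCdef
  have hC : Convex ℝ C := convex_convexHull ℝ S
  have hp₀C : p₀ ∈ C := subset_convexHull ℝ S hp₀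
  by_cases hi : (interior C).Nonempty
  · obtain ⟨x₀, hx₀⟩ := hi
    obtain ⟨f, hf⟩ := geometric_hahn_banach_open_point hC.interior isOpen_interior h
    have hf0 : ∀ z ∈ interior C, f z < 0 := by simpa using hf
    have hle : ∀ w ∈ C, f w ≤ 0 := by
      intro w hw
      by_contra hpos
      push_neg at hpos
      set A := f x₀ with hA
      set B := f w with hB
      set t : ℝ := B / (B - A) with ht
      have hAneg : A < 0 := hf0 x₀ hx₀
      have hBA : 0 < B - A := by linarith
      have ht0 : 0 < t := div_pos hpos hBA
      have ht1 : (0:ℝ) ≤ 1 - t := by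
        rw [sub_nonneg, ht, div_le_one hBA]; linarith
      have hmem := hC.combo_interior_self_mem_interior hx₀ hw ht0 ht1 (by ring)
      have hneg := hf0 _ hmem
      have hval : f (t • x₀ + (1 - t) • w) = t * A + (1 - t) * B := by
        simp only [_root_.map_add, _root_.map_smul, smul_eq_mul, hA, hB]
      have teq : t * (B - A) = B := div_mul_cancel₀ _ hBA.ne'
      rw [hval] at hneg
      nlinarith
    refine toA (-(f : ℂ →ₗ[ℝ] ℝ)) ?_ 0 le_rfl S ?_
    · intro h0
      have : (-(f : ℂ →ₗ[ℝ] ℝ)) x₀ = 0 := by rw [h0]; rfl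
      have hx : -(f x₀) = 0 := this
      have := hf0 x₀ hx₀
      linarith
    · intro w hw
      have := hle w (subset_convexHull ℝ S hw)
      simpa using neg_nonneg.mpr this
  · have hspan : affineSpan ℝ C ≠ ⊤ := fun htop =>
      hi ((hC.interior_nonempty_iff_affineSpan_eq_top).mpr htop)
    have hvs : vectorSpan ℝ C ≠ ⊤ := fun htop =>
      hspan ((AffineSubspace.affineSpan_eq_top_iff_vectorSpan_eq_top_of_nonempty ℝ ℂ ℂ ⟨p₀, hp₀C⟩).mpr htop)
    obtain ⟨g, hg0, hker⟩ :=
      (vectorSpan ℝ C).exists_dual_map_eq_bot_of_lt_top hvs.lt_top inferInstance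
    have hconst : ∀ w ∈ C, g w = g p₀ := by
      intro w hw
      have hmem : w - p₀ ∈ vectorSpan ℝ C := by
        have := vsub_mem_vectorSpan ℝ hw hp₀C
        simpa using this
      have hz : g (w - p₀) = 0 := by
        have h' : g (w - p₀) ∈ (vectorSpan ℝ C).map g := Submodule.mem_map_of_mem hmem
        rw [hker] at h'
        simpa using h'
      have := _root_.map_sub g w p₀
      rw [this] at hz
      linarith
    rcases le_or_gt 0 (g p₀) with hd | hd
    · exact toA g hg0 (g p₀) hd S
        (fun w hw => (hconst w (subset_convexHull ℝ S hw)).ge)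
    · refine toA (-g) (neg_ne_zero.mpr hg0) (-(g p₀)) (by linarith) S ?_
      intro w hw
      have := hconst w (subset_convexHull ℝ S hw)
      simp [this]

lemma sep_fwd {S : Set ℂ} (a : ℂ) (c : ℝ) (ha : ‖a‖ = 1) (hc : 0 ≤ c)
    (hw : ∀ w ∈ S, c ≤ ((starRingEnd ℂ) a * w).re) :
    (0:ℂ) ∉ interior (convexHull ℝ S) := by
  intro h0
  have hlin : IsLinearMap ℝ (fun z : ℂ => ((starRingEnd ℂ) a * z).re) := by
    constructor
    · intro x y; simp [mul_add]
    · intro r x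
      simp only [Complex.real_smul, smul_eq_mul]
      rw [mul_left_comm, Complex.re_ofReal_mul]
  have hconv : Convex ℝ {z : ℂ | c ≤ ((starRingEnd ℂ) a * z).re} :=
    convex_halfSpace_ge hlin c
  have hsub : convexHull ℝ S ⊆ {z : ℂ | c ≤ ((starRingEnd ℂ) a * z).re} :=
    convexHull_min hw hconv
  obtain ⟨ε, hε, hball⟩ := Metric.mem_nhds_iff.mp (mem_interior_iff_mem_nhds.mp h0)
  set z : ℂ := (-(ε/2) : ℝ) • a with hz
  have hzball : z ∈ Metric.ball (0:ℂ) ε := by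
    rw [mem_ball_zero_iff, hz, norm_smul, ha, Real.norm_eq_abs, mul_one,
      abs_of_nonpos (by linarith)]
    linarith
  have hzC := hsub (hball hzball)
  have hre : ((starRingEnd ℂ) a * z).re = -(ε/2) := by
    rw [hz]
    simp only [Complex.real_smul]
    rw [mul_left_comm, Complex.re_ofReal_mul, Complex.conj_mul']
    have : ‖a‖ = 1 := ha
    simp [Complex.sq_norm, Complex.normSq_eq_norm_sq, this]
  rw [Set.mem_setOf_eq, hre] at hzC
  linarith

/-- `f ∈ L¹(k,s)` is weakly sectorial iff `0 ∉ Int(Coh[ENR(f)])`. -/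
theorem stmt6 {k s : ℕ} (f : (Fin k → ℝ) → Matrix (Fin s) (Fin s) ℂ)
    (hf : ∀ i j, IntegrableOn (fun x => f x i j) (Ik k)) :
    WeaklySectorial f ↔ (0 : ℂ) ∉ interior (convexHull ℝ (ENR (Ik k) f)) := by
  constructor
  · rintro ⟨a, c, ha, hc, hw⟩
    exact sep_fwd a c ha hc hw
  · intro h0
    exact sep h0

end
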